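/- Given reals ρ₀ ≠ 0 and ρ₁, ρ₂, …, set x_r := −(2r+1)!!·ρ_r/((r+1)·ρ₀), and for integers B ≥ 3 and 0 ≤ M ≤ B−3 define γ^M_B := ρ₀^{−(B−3)}·Σ_{K=0}^{B−3−M} ((B−3+K)!/((B−3−M)!·M!))·B_{B−3−M,K}(x₁,…,x_{B−2−M−K}); set γ^M_B := 0 when M < 0 or M > B−3. Then for every B ≥ 4 and every 0 ≤ M ≤ B−3: Σ_{j=0}^{B−3−M} C(M+j, j)·(2j+1)!!·ρ_j·γ^{M+j}_B = γ^{M−1}_{B−1}, where C(·,·) is the binomial coefficient and (2j+1)!! := (2j+1)!/(2^j·j!). -/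

import Mathlib

/-- The partial Bell polynomial `B_{n,k}(x₁,…,x_{n−k+1})`, defined by the explicit sum
`Σ n!/(j₁!⋯j_{n−k+1}!)·∏ᵢ(xᵢ/i!)^{jᵢ}` over nonnegative integers `j₁,…,j_{n−k+1}` with
`j₁+⋯+j_{n−k+1} = k` and `1j₁+2j₂+⋯+(n−k+1)j_{n−k+1} = n`. -/
noncomputable def bellPoly (n k : ℕ) (x : ℕ → ℝ) : ℝ :=
  ∑ j ∈ (Finset.Nat.antidiagonalTuple (n - k + 1) k).filter
      (fun j : Fin (n - k + 1) → ℕ => ∑ i : Fin (n - k + 1), ((i : ℕ) + 1) * j i = n),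
    (n.factorial : ℝ) / (∏ i : Fin (n - k + 1), ((j i).factorial : ℝ)) *
      ∏ i : Fin (n - k + 1), (x ((i : ℕ) + 1) / (((i : ℕ) + 1).factorial : ℝ)) ^ (j i)

/-- The odd double factorial `(2j+1)!! = (2j+1)!/(2^j·j!)` as a real number. -/
noncomputable def df (j : ℕ) : ℝ := ((2 * j + 1).factorial : ℝ) / (2 ^ j * (j.factorial : ℝ))

/-- The coefficients `γ^M_B` built from a sequence `ρ₀, ρ₁, …`:
`γ^M_B = ρ₀^{−(B−3)}·Σ_{K=0}^{B−3−M} ((B−3+K)!/((B−3−M)!·M!))·B_{B−3−M,K}(x₁,…)` with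
`x_r = −(2r+1)!!·ρ_r/((r+1)·ρ₀)`, for `B ≥ 3` and `0 ≤ M ≤ B−3`, and `γ^M_B = 0`
for `M` out of this range. -/
noncomputable def gam (ρs : ℕ → ℝ) (B : ℕ) (M : ℤ) : ℝ :=
  if 3 ≤ B ∧ 0 ≤ M ∧ M ≤ (B : ℤ) - 3 then
    (ρs 0 ^ (B - 3))⁻¹ *
      ∑ K ∈ Finset.range (B - 3 - M.toNat + 1),
        ((B - 3 + K).factorial : ℝ) /
            (((B - 3 - M.toNat).factorial : ℝ) * (M.toNat.factorial : ℝ)) *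
          bellPoly (B - 3 - M.toNat) K (fun r => -(df r * ρs r) / ((r + 1) * ρs 0))
  else 0

namespace StmtAux

open PowerSeries Finset

/-- The power series `Σ_{i≥1} x_i t^i / i!`. -/
noncomputable def phi (x : ℕ → ℝ) : PowerSeries ℝ :=
  PowerSeries.mk fun i => if i = 0 then 0 else x i / i.factorial

lemma coeff_phi (x : ℕ → ℝ) (d : ℕ) :
    PowerSeries.coeff d (phi x) = if d = 0 then 0 else x d / d.factorial := by
  simp [phi]

lemma coeff_phi_pow_eq_zero (x : ℕ → ℝ) {d K : ℕ} (h : d < K) :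
    PowerSeries.coeff d ((phi x) ^ K) = 0 := by
  have hX : (PowerSeries.X : PowerSeries ℝ) ∣ phi x := by
    rw [PowerSeries.X_dvd_iff]
    simp [phi]
  exact PowerSeries.X_pow_dvd_iff.mp (pow_dvd_pow_of_dvd hX K) d h

lemma reindex_prod {M : Type*} [CommMonoid M] {a n : ℕ} (ha : a ≤ n) (G : ℕ → M)
    (hG : ∀ t, t ∉ Finset.Icc 1 a → G t = 1) :
    ∏ t ∈ Finset.Ioc 0 n, G t = ∏ i ∈ Finset.range a, G (i + 1) := by
  have h1 : ∏ t ∈ Finset.Ioc 0 n, G t = ∏ t ∈ Finset.Icc 1 a, G t := by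
    refine (Finset.prod_subset ?_ ?_).symm
    · intro t ht
      simp only [Finset.mem_Icc] at ht
      simp only [Finset.mem_Ioc]
      omega
    · intro t _ ht
      exact hG t ht
  rw [h1, ← Finset.Ico_add_one_right_eq_Icc, Finset.prod_Ico_eq_prod_range]
  simp [Nat.add_comm]

/-- Extension of a `Fin a`-tuple to `ℕ`, shifted by one. -/
def ext1 (a : ℕ) (j : Fin a → ℕ) : ℕ → ℕ :=
  fun t => if h : 1 ≤ t ∧ t - 1 < a then j ⟨t - 1, h.2⟩ else 0

lemma ext1_succ (a : ℕ) (j : Fin a → ℕ) (i : Fin a) : ext1 a j ((i : ℕ) + 1) = j i := by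
  have h : 1 ≤ (i : ℕ) + 1 ∧ (i : ℕ) + 1 - 1 < a := ⟨by omega, by simp⟩
  rw [ext1, dif_pos h]
  exact congrArg j (Fin.ext (by simp))

lemma ext1_eq_zero (a : ℕ) (j : Fin a → ℕ) {t : ℕ} (ht : t ∉ Finset.Icc 1 a) :
    ext1 a j t = 0 := by
  rw [ext1, dif_neg]
  simp only [Finset.mem_Icc] at ht
  omega

lemma prod_ext1 {M : Type*} [CommMonoid M] {a n : ℕ} (ha : a ≤ n) (j : Fin a → ℕ)
    (w : ℕ → ℕ → M) (hw : ∀ t, w t 0 = 1) :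
    ∏ t ∈ Finset.Ioc 0 n, w t (ext1 a j t) = ∏ i : Fin a, w ((i : ℕ) + 1) (j i) := by
  rw [reindex_prod ha _ (fun t ht => by rw [ext1_eq_zero a j ht, hw])]
  rw [← Fin.prod_univ_eq_prod_range (fun t => w (t + 1) (ext1 a j (t + 1))) a]
  exact Finset.prod_congr rfl fun i _ => by rw [ext1_succ]

lemma sum_ext1 {a n : ℕ} (ha : a ≤ n) (j : Fin a → ℕ) (w : ℕ → ℕ → ℕ)
    (hw : ∀ t, w t 0 = 0) :
    ∑ t ∈ Finset.Ioc 0 n, w t (ext1 a j t) = ∑ i : Fin a, w ((i : ℕ) + 1) (j i) :=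
  prod_ext1 (M := Multiplicative ℕ) ha j w hw

/-- The fundamental bridge: Bell polynomials are coefficients of powers of `phi x`. -/
lemma bell_eq (x : ℕ → ℝ) (n k : ℕ) :
    (k.factorial : ℝ) * bellPoly n k x
      = (n.factorial : ℝ) * PowerSeries.coeff n ((phi x) ^ k) := by
  rcases Nat.eq_zero_or_pos k with rfl | hk
  · rcases Nat.eq_zero_or_pos n with rfl | hn
    · simp [bellPoly, Finset.Nat.antidiagonalTuple_zero_right, Finset.filter_singleton]
    · simp only [pow_zero, PowerSeries.coeff_one, Nat.factorial_zero, Nat.cast_one, one_mul,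
        if_neg hn.ne']
      rw [bellPoly, Finset.Nat.antidiagonalTuple_zero_right]
      rw [Finset.filter_singleton, if_neg (by simp; omega), Finset.sum_empty, mul_zero]
  rcases lt_or_ge n k with hnk | hkn
  · rw [coeff_phi_pow_eq_zero x hnk, mul_zero, bellPoly]
    rw [Finset.sum_eq_zero, mul_zero]
    intro j hj
    simp only [Finset.mem_filter, Finset.Nat.mem_antidiagonalTuple] at hj
    exfalso
    have h1 : ∑ i : Fin (n - k + 1), j i ≤ ∑ i : Fin (n - k + 1), ((i : ℕ) + 1) * j i :=
      Finset.sum_le_sum fun i _ => Nat.le_mul_of_pos_left _ (Nat.succ_pos _)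
    omega
  -- main case : 1 ≤ k ≤ n
  have hak : n - k + 1 ≤ n := by omega
  set a := n - k + 1 with ha_def
  set s : Finset ℕ := Finset.Ioc 0 n with hs_def
  set c : ℕ → ℝ := fun i => x i / i.factorial with hc_def
  set p : PowerSeries ℝ := ∑ i ∈ s, PowerSeries.C (c i) * PowerSeries.X ^ i with hp_def
  have coeff_p : ∀ d : ℕ, PowerSeries.coeff d p = if d ∈ s then c d else 0 := by
    intro d
    rw [hp_def, map_sum]
    simp only [PowerSeries.coeff_C_mul, PowerSeries.coeff_X_pow, mul_ite, mul_one, mul_zero]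
    simp only [eq_comm (a := d)]
    exact Finset.sum_ite_eq' s d c
  have hstep_a : PowerSeries.coeff n ((phi x) ^ k) = PowerSeries.coeff n (p ^ k) := by
    rw [PowerSeries.coeff_pow, PowerSeries.coeff_pow]
    refine Finset.sum_congr rfl fun l hl => Finset.prod_congr rfl fun i hi => ?_
    rw [Finset.mem_finsuppAntidiag] at hl
    have hle : l i ≤ n := by
      calc l i ≤ ∑ t ∈ Finset.range k, l t :=
        Finset.single_le_sum (f := fun t => l t) (fun t _ => Nat.zero_le _) hi
      _ = n := hl.1
    rw [coeff_p, phi, PowerSeries.coeff_mk]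
    rcases Nat.eq_zero_or_pos (l i) with h0 | h1
    · simp [h0, hs_def]
    · rw [if_neg (by omega), if_pos (by simp only [hs_def, Finset.mem_Ioc]; omega)]
  have hstep_b : PowerSeries.coeff n (p ^ k)
      = ∑ μ ∈ (Finset.piAntidiag s k).filter (fun μ => ∑ i ∈ s, i * μ i = n),
          (k.factorial : ℝ) / (∏ i ∈ s, ((μ i).factorial : ℝ)) * ∏ i ∈ s, c i ^ μ i := by
    rw [hp_def, Finset.sum_pow_eq_sum_piAntidiag, map_sum, Finset.sum_filter]
    refine Finset.sum_congr rfl fun μ hμ => ?_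
    rw [Finset.mem_piAntidiag] at hμ
    have hprod : ∏ i ∈ s, (PowerSeries.C (c i) * PowerSeries.X ^ i) ^ μ i
        = PowerSeries.C (∏ i ∈ s, c i ^ μ i) * PowerSeries.X ^ (∑ i ∈ s, i * μ i) := by
      calc ∏ i ∈ s, (PowerSeries.C (c i) * PowerSeries.X ^ i) ^ μ i
          = ∏ i ∈ s, (PowerSeries.C (c i ^ μ i) * PowerSeries.X ^ (i * μ i)) :=
            Finset.prod_congr rfl fun i _ => by rw [mul_pow, ← map_pow, ← pow_mul]
        _ = (∏ i ∈ s, PowerSeries.C (c i ^ μ i)) * ∏ i ∈ s, PowerSeries.X ^ (i * μ i) :=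
            Finset.prod_mul_distrib
        _ = _ := by rw [← map_prod, Finset.prod_pow_eq_pow_sum]
    rw [hprod]
    have hcast : ((Nat.multinomial s μ : ℕ) : PowerSeries ℝ)
        = PowerSeries.C ((Nat.multinomial s μ : ℕ) : ℝ) := by
      rw [map_natCast]
    rw [hcast, ← mul_assoc, ← map_mul, PowerSeries.coeff_C_mul, PowerSeries.coeff_X_pow]
    by_cases hcond : ∑ i ∈ s, i * μ i = n
    · rw [if_pos hcond, if_pos hcond.symm, mul_one]
      have hspec := Nat.multinomial_spec s μ
      have hfac : (∏ i ∈ s, ((μ i).factorial : ℝ)) ≠ 0 :=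
        Finset.prod_ne_zero_iff.mpr fun i _ => Nat.cast_ne_zero.mpr (Nat.factorial_ne_zero _)
      have hmul : ((Nat.multinomial s μ : ℕ) : ℝ)
          = (k.factorial : ℝ) / (∏ i ∈ s, ((μ i).factorial : ℝ)) := by
        rw [eq_div_iff hfac, mul_comm]
        rw [← Nat.cast_prod, ← Nat.cast_mul, hspec, hμ.1]
      rw [hmul]
    · rw [if_neg hcond, if_neg (fun h => hcond h.symm), mul_zero]
  rw [hstep_a, hstep_b, bellPoly, Finset.mul_sum, Finset.mul_sum]
  have hsupp : ∀ μ : ℕ → ℕ, μ ∈ (Finset.piAntidiag s k).filter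
      (fun μ => ∑ i ∈ s, i * μ i = n) → ∀ t, t ∉ Finset.Icc 1 a → μ t = 0 := by
    intro μ hμ t ht
    simp only [Finset.mem_filter, Finset.mem_piAntidiag] at hμ
    obtain ⟨⟨hsum, hsub⟩, hw⟩ := hμ
    by_contra h0
    have hts : t ∈ s := hsub t h0
    simp only [hs_def, Finset.mem_Ioc] at hts
    simp only [Finset.mem_Icc] at ht
    have hta : a < t := by omega
    have e1 : ∀ i ∈ s, i * μ i = μ i + (i - 1) * μ i := by
      intro i hi
      simp only [hs_def, Finset.mem_Ioc] at hi
      have : i = 1 + (i - 1) := by omega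
      rw [this, Nat.add_mul, Nat.one_mul, Nat.add_sub_cancel_left]
    have e2 : ∑ i ∈ s, i * μ i = k + ∑ i ∈ s, (i - 1) * μ i := by
      rw [Finset.sum_congr rfl e1, Finset.sum_add_distrib, hsum]
    have h2 : (t - 1) * μ t ≤ ∑ i ∈ s, (i - 1) * μ i :=
      Finset.single_le_sum (f := fun i => (i - 1) * μ i) (fun i _ => Nat.zero_le _)
        (by simp only [hs_def, Finset.mem_Ioc]; omega)
    have h3 : t - 1 ≤ (t - 1) * μ t := Nat.le_mul_of_pos_right _ (Nat.pos_of_ne_zero h0)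
    omega
  have hre : ∀ μ : ℕ → ℕ, μ ∈ (Finset.piAntidiag s k).filter
      (fun μ => ∑ i ∈ s, i * μ i = n) →
      ext1 a (fun i : Fin a => μ ((i : ℕ) + 1)) = μ := by
    intro μ hμ
    funext t
    by_cases ht : t ∈ Finset.Icc 1 a
    · simp only [Finset.mem_Icc] at ht
      rw [ext1, dif_pos ⟨ht.1, by omega⟩]
      show μ (t - 1 + 1) = μ t
      congr 1
      omega
    · rw [ext1_eq_zero a _ ht, hsupp μ hμ t ht]
  refine Finset.sum_nbij' (i := fun j => ext1 a j) (j := fun μ (i : Fin a) => μ ((i : ℕ) + 1))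
    ?_ ?_ ?_ ?_ ?_
  · intro j hj
    simp only [Finset.mem_filter, Finset.Nat.mem_antidiagonalTuple] at hj
    obtain ⟨hjsum, hjw⟩ := hj
    simp only [Finset.mem_filter, Finset.mem_piAntidiag]
    refine ⟨⟨?_, ?_⟩, ?_⟩
    · rw [sum_ext1 (w := fun t m => m) hak j (fun t => rfl)]
      exact hjsum
    · intro t ht
      by_contra hts
      exact ht (ext1_eq_zero a j (fun hmem => hts (by
        simp only [Finset.mem_Icc] at hmem
        simp only [hs_def, Finset.mem_Ioc]
        omega)))
    · rw [sum_ext1 (w := fun t m => t * m) hak j (fun t => Nat.mul_zero t)]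
      exact hjw
  · intro μ hμ
    have hμ' := hμ
    simp only [Finset.mem_filter, Finset.mem_piAntidiag] at hμ'
    obtain ⟨⟨hsum, hsub⟩, hw⟩ := hμ'
    have hre' := hre μ hμ
    simp only [Finset.mem_filter, Finset.Nat.mem_antidiagonalTuple]
    constructor
    · have := sum_ext1 (w := fun t m => m) hak (fun i : Fin a => μ ((i : ℕ) + 1)) (fun t => rfl)
      rw [hre'] at this
      rw [← this, hsum]
    · have := sum_ext1 (w := fun t m => t * m) hak (fun i : Fin a => μ ((i : ℕ) + 1))
        (fun t => Nat.mul_zero t)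
      rw [hre'] at this
      rw [← this, hw]
  · intro j _
    funext i
    exact ext1_succ a j i
  · intro μ hμ
    exact hre μ hμ
  · intro j hj
    have e1 : ∏ t ∈ s, ((ext1 a j t).factorial : ℝ)
        = ∏ i : Fin a, ((j i).factorial : ℝ) :=
      prod_ext1 hak j (fun t m => (m.factorial : ℝ)) (fun t => by simp)
    have e2 : ∏ t ∈ s, (c t) ^ (ext1 a j t)
        = ∏ i : Fin a, (x ((i : ℕ) + 1) / (((i : ℕ) + 1).factorial : ℝ)) ^ (j i) :=
      prod_ext1 hak j (fun t m => (c t) ^ m) (fun t => pow_zero _)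
    rw [← e1, ← e2]
    ring


/-- The series `Σ_{K=0}^{m} ((n+K)!/K!)·φ^K`. -/
noncomputable def Qser (x : ℕ → ℝ) (n m : ℕ) : PowerSeries ℝ :=
  ∑ K ∈ Finset.range (m + 1),
    PowerSeries.C (((n + K).factorial : ℝ) / (K.factorial : ℝ)) * (phi x) ^ K

lemma coeff_Qser (x : ℕ → ℝ) (n m d : ℕ) :
    PowerSeries.coeff d (Qser x n m)
      = ∑ K ∈ Finset.range (m + 1),
          ((n + K).factorial : ℝ) / (K.factorial : ℝ) *
            PowerSeries.coeff d ((phi x) ^ K) := by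
  rw [Qser, map_sum]
  exact Finset.sum_congr rfl fun K _ => PowerSeries.coeff_C_mul _ _ _

lemma fact_idA (n' K : ℕ) :
    ((n' + 1 + (K + 1)).factorial : ℝ) / ((K + 1).factorial : ℝ)
      - ((n' + 1 + K).factorial : ℝ) / (K.factorial : ℝ)
    = ((n' : ℝ) + 1) * (((n' + (K + 1)).factorial : ℝ) / ((K + 1).factorial : ℝ)) := by
  have e1 : n' + 1 + (K + 1) = (n' + 1 + K) + 1 := by ring
  have e2 : n' + (K + 1) = n' + 1 + K := by ring
  rw [e1, e2, Nat.factorial_succ, Nat.factorial_succ K]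
  have h1 : (K.factorial : ℝ) ≠ 0 := Nat.cast_ne_zero.mpr (Nat.factorial_ne_zero _)
  have h2 : ((K : ℝ) + 1) ≠ 0 := by positivity
  push_cast
  field_simp
  ring

lemma fact_idB (n' m : ℕ) :
    ((m : ℝ) + 1) * (((n' + (m + 1)).factorial : ℝ) / ((m + 1).factorial : ℝ))
      = ((n' + 1 + m).factorial : ℝ) / (m.factorial : ℝ) := by
  have e2 : n' + (m + 1) = n' + 1 + m := by ring
  rw [e2, Nat.factorial_succ m]
  have h1 : (m.factorial : ℝ) ≠ 0 := Nat.cast_ne_zero.mpr (Nat.factorial_ne_zero _)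
  have h2 : ((m : ℝ) + 1) ≠ 0 := by positivity
  push_cast
  field_simp

/-- Identity A : `(φ − 1)·Q_{n+1,m} = ((n+1+m)!/m!)·φ^{m+1} − (n+1)·Q_{n,m}`. -/
lemma idA (x : ℕ → ℝ) (n' : ℕ) : ∀ m : ℕ,
    (phi x - 1) * Qser x (n' + 1) m
      = PowerSeries.C (((n' + 1 + m).factorial : ℝ) / (m.factorial : ℝ)) * (phi x) ^ (m + 1)
        - PowerSeries.C ((n' : ℝ) + 1) * Qser x n' m := by
  intro m
  induction m with
  | zero =>
      have hsc : ((n' : ℝ) + 1) * (((n' + 0).factorial : ℝ) / ((Nat.factorial 0 : ℕ) : ℝ))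
          = ((n' + 1 + 0).factorial : ℝ) / ((Nat.factorial 0 : ℕ) : ℝ) := by
        have e : n' + 1 + 0 = (n' + 0) + 1 := by omega
        rw [e, Nat.factorial_succ]
        push_cast
        ring_nf
      simp only [Qser, zero_add, Finset.sum_range_one, pow_zero, mul_one, pow_one]
      rw [← map_mul, hsc]
      ring
  | succ m ih =>
      have hQ : Qser x (n' + 1) (m + 1)
          = Qser x (n' + 1) m
            + PowerSeries.C (((n' + 1 + (m + 1)).factorial : ℝ) / ((m + 1).factorial : ℝ))
              * (phi x) ^ (m + 1) := by
        rw [Qser, Finset.sum_range_succ]; rfl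
      have hQ' : Qser x n' (m + 1)
          = Qser x n' m
            + PowerSeries.C (((n' + (m + 1)).factorial : ℝ) / ((m + 1).factorial : ℝ))
              * (phi x) ^ (m + 1) := by
        rw [Qser, Finset.sum_range_succ]; rfl
      rw [hQ, hQ', mul_add, ih]
      have hkey : (phi x - 1) *
          (PowerSeries.C (((n' + 1 + (m + 1)).factorial : ℝ) / ((m + 1).factorial : ℝ))
            * (phi x) ^ (m + 1))
          = PowerSeries.C (((n' + 1 + (m + 1)).factorial : ℝ) / ((m + 1).factorial : ℝ))
              * (phi x) ^ (m + 2)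
            - (PowerSeries.C (((n' + 1 + (m + 1)).factorial : ℝ) / ((m + 1).factorial : ℝ))
              - PowerSeries.C (((n' + 1 + m).factorial : ℝ) / (m.factorial : ℝ)))
              * (phi x) ^ (m + 1)
            - PowerSeries.C (((n' + 1 + m).factorial : ℝ) / (m.factorial : ℝ))
              * (phi x) ^ (m + 1) := by
        ring
      rw [hkey, ← map_sub, show (((n' + 1 + (m + 1)).factorial : ℝ) / ((m + 1).factorial : ℝ))
            - (((n' + 1 + m).factorial : ℝ) / (m.factorial : ℝ))
          = ((n' : ℝ) + 1) * (((n' + (m + 1)).factorial : ℝ) / ((m + 1).factorial : ℝ))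
          from fact_idA n' m, map_mul]
      ring


lemma idB (x : ℕ → ℝ) (n' : ℕ) : ∀ m : ℕ,
    PowerSeries.X * (PowerSeries.derivative ℝ (Qser x n' m))
      = (PowerSeries.X * PowerSeries.derivative ℝ (phi x)) * Qser x (n' + 1) m
        - PowerSeries.C (((n' + 1 + m).factorial : ℝ) / (m.factorial : ℝ))
          * ((PowerSeries.X * PowerSeries.derivative ℝ (phi x)) * (phi x) ^ m) := by
  intro m
  induction m with
  | zero =>
      simp only [Qser, zero_add, Finset.sum_range_one, Nat.add_zero, pow_zero, mul_one,
        PowerSeries.derivative_C, mul_zero]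
      ring
  | succ m ih =>
      have hQ' : Qser x n' (m + 1)
          = Qser x n' m
            + PowerSeries.C (((n' + (m + 1)).factorial : ℝ) / ((m + 1).factorial : ℝ))
              * (phi x) ^ (m + 1) := by
        rw [Qser, Finset.sum_range_succ]; rfl
      have hQ : Qser x (n' + 1) (m + 1)
          = Qser x (n' + 1) m
            + PowerSeries.C (((n' + 1 + (m + 1)).factorial : ℝ) / ((m + 1).factorial : ℝ))
              * (phi x) ^ (m + 1) := by
        rw [Qser, Finset.sum_range_succ]; rfl
      have e3 : PowerSeries.C ((m : ℝ) + 1)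
            * PowerSeries.C (((n' + (m + 1)).factorial : ℝ) / ((m + 1).factorial : ℝ))
          = PowerSeries.C (((n' + 1 + m).factorial : ℝ) / (m.factorial : ℝ)) := by
        rw [← map_mul, fact_idB]
      have hcastC : ((m + 1 : ℕ) : PowerSeries ℝ) = PowerSeries.C ((m : ℝ) + 1) := by
        rw [← map_natCast (PowerSeries.C (R := ℝ)) (m + 1)]
        push_cast
        rfl
      have hder : PowerSeries.derivative ℝ
          (PowerSeries.C (((n' + (m + 1)).factorial : ℝ) / ((m + 1).factorial : ℝ))
            * (phi x) ^ (m + 1))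
          = PowerSeries.C (((n' + 1 + m).factorial : ℝ) / (m.factorial : ℝ))
            * ((phi x) ^ m * PowerSeries.derivative ℝ (phi x)) := by
        rw [Derivation.leibniz, PowerSeries.derivative_C, smul_zero, add_zero, smul_eq_mul,
          Derivation.leibniz_pow, Nat.add_sub_cancel, nsmul_eq_mul, hcastC]
        simp only [smul_eq_mul]
        linear_combination ((phi x) ^ m * PowerSeries.derivative ℝ (phi x)) * e3
      rw [hQ', map_add, hder, mul_add, ih, hQ]
      ring

lemma coeff_zero_X_mul (ψ : PowerSeries ℝ) :
    PowerSeries.coeff 0 (PowerSeries.X * ψ) = 0 := by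
  rw [PowerSeries.coeff_zero_eq_constantCoeff, map_mul, PowerSeries.constantCoeff_X, zero_mul]

lemma coeff_X_deriv (ψ : PowerSeries ℝ) (d : ℕ) :
    PowerSeries.coeff d (PowerSeries.X * PowerSeries.derivative ℝ ψ)
      = (d : ℝ) * PowerSeries.coeff d ψ := by
  cases d with
  | zero => rw [coeff_zero_X_mul]; simp
  | succ e =>
      rw [PowerSeries.coeff_succ_X_mul, PowerSeries.coeff_derivative]
      push_cast
      ring

lemma coeff_XD_mul_pow (x : ℕ → ℝ) (ψ : PowerSeries ℝ) (m : ℕ) :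
    PowerSeries.coeff m ((PowerSeries.X * ψ) * (phi x) ^ m) = 0 := by
  rw [PowerSeries.coeff_mul]
  refine Finset.sum_eq_zero fun p hp => ?_
  rw [Finset.HasAntidiagonal.mem_antidiagonal] at hp
  rcases Nat.eq_zero_or_pos p.1 with h0 | h1
  · rw [h0, coeff_zero_X_mul, zero_mul]
  · rw [coeff_phi_pow_eq_zero x (by omega), mul_zero]

lemma h_decomp (x : ℕ → ℝ) (hx0 : x 0 = -1) :
    PowerSeries.mk (fun j => ((j : ℝ) + 1) * x j / j.factorial)
      = (phi x - 1) + PowerSeries.X * PowerSeries.derivative ℝ (phi x) := by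
  ext d
  rw [PowerSeries.coeff_mk, map_add, map_sub, coeff_X_deriv]
  cases d with
  | zero =>
      simp [phi, hx0]
  | succ e =>
      simp only [phi, PowerSeries.coeff_mk, PowerSeries.coeff_one,
        if_neg (Nat.succ_ne_zero e)]
      push_cast
      ring

lemma key_coeff (x : ℕ → ℝ) (hx0 : x 0 = -1) (n' m M : ℕ) (hM : m + M = n' + 1) :
    PowerSeries.coeff m
        (PowerSeries.mk (fun j => ((j : ℝ) + 1) * x j / j.factorial) * Qser x (n' + 1) m)
      = -(M : ℝ) * PowerSeries.coeff m (Qser x n' m) := by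
  rw [h_decomp x hx0, add_mul, map_add]
  have hA : PowerSeries.coeff m ((phi x - 1) * Qser x (n' + 1) m)
      = -(((n' : ℝ) + 1)) * PowerSeries.coeff m (Qser x n' m) := by
    rw [idA x n' m, map_sub, PowerSeries.coeff_C_mul, PowerSeries.coeff_C_mul,
      coeff_phi_pow_eq_zero x (by omega), mul_zero, zero_sub, neg_mul]
  have hB : PowerSeries.coeff m
      ((PowerSeries.X * PowerSeries.derivative ℝ (phi x)) * Qser x (n' + 1) m)
      = (m : ℝ) * PowerSeries.coeff m (Qser x n' m) := by
    have h1 := congrArg (PowerSeries.coeff (R := ℝ) m) (idB x n' m)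
    rw [map_sub, PowerSeries.coeff_C_mul, coeff_XD_mul_pow, mul_zero, sub_zero,
      coeff_X_deriv] at h1
    exact h1.symm
  rw [hA, hB]
  have : -(M : ℝ) = (m : ℝ) - ((n' : ℝ) + 1) := by
    have : (m : ℝ) + (M : ℝ) = (n' : ℝ) + 1 := by exact_mod_cast congrArg Nat.cast hM
    linarith
  rw [this]
  ring

/-- The sequence `x_r` built from `ρ`. -/
noncomputable def xf (ρs : ℕ → ℝ) : ℕ → ℝ := fun r => -(df r * ρs r) / ((r + 1) * ρs 0)

lemma gam_eq (ρs : ℕ → ℝ) (B₀ M₀ m : ℕ) (hB₀ : 3 ≤ B₀) (hM₀ : M₀ ≤ B₀ - 3)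
    (hm : B₀ - 3 - M₀ ≤ m) :
    gam ρs B₀ (M₀ : ℤ) = (ρs 0 ^ (B₀ - 3))⁻¹ * ((M₀.factorial : ℝ)⁻¹ *
      ∑ K ∈ Finset.range (m + 1),
        ((B₀ - 3 + K).factorial : ℝ) / (K.factorial : ℝ) *
          PowerSeries.coeff (B₀ - 3 - M₀) ((phi (xf ρs)) ^ K)) := by
  have hcond : 3 ≤ B₀ ∧ 0 ≤ (M₀ : ℤ) ∧ (M₀ : ℤ) ≤ (B₀ : ℤ) - 3 := ⟨hB₀, by omega, by omega⟩
  rw [gam, if_pos hcond]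
  simp only [Int.toNat_natCast]
  congr 1
  rw [show (fun r : ℕ => -(df r * ρs r) / ((r + 1) * ρs 0)) = xf ρs from rfl]
  rw [Finset.mul_sum]
  rw [← Finset.sum_subset (Finset.range_subset_range.mpr (by omega : B₀ - 3 - M₀ + 1 ≤ m + 1))]
  · refine Finset.sum_congr rfl fun K hK => ?_
    have h1 : (K.factorial : ℝ) ≠ 0 := Nat.cast_ne_zero.mpr (Nat.factorial_ne_zero _)
    have h2 : ((B₀ - 3 - M₀).factorial : ℝ) ≠ 0 := Nat.cast_ne_zero.mpr (Nat.factorial_ne_zero _)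
    have h3 : (M₀.factorial : ℝ) ≠ 0 := Nat.cast_ne_zero.mpr (Nat.factorial_ne_zero _)
    apply mul_left_cancel₀ h1
    calc (K.factorial : ℝ) *
          (((B₀ - 3 + K).factorial : ℝ) / (((B₀ - 3 - M₀).factorial : ℝ) * (M₀.factorial : ℝ)) *
            bellPoly (B₀ - 3 - M₀) K (xf ρs))
        = ((B₀ - 3 + K).factorial : ℝ) / (((B₀ - 3 - M₀).factorial : ℝ) * (M₀.factorial : ℝ)) *
            ((K.factorial : ℝ) * bellPoly (B₀ - 3 - M₀) K (xf ρs)) := by ring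
      _ = ((B₀ - 3 + K).factorial : ℝ) / (((B₀ - 3 - M₀).factorial : ℝ) * (M₀.factorial : ℝ)) *
            (((B₀ - 3 - M₀).factorial : ℝ) *
              PowerSeries.coeff (B₀ - 3 - M₀) ((phi (xf ρs)) ^ K)) := by
          rw [bell_eq]
      _ = (K.factorial : ℝ) * ((M₀.factorial : ℝ)⁻¹ *
            (((B₀ - 3 + K).factorial : ℝ) / (K.factorial : ℝ) *
              PowerSeries.coeff (B₀ - 3 - M₀) ((phi (xf ρs)) ^ K))) := by
          field_simp
  · intro K hK1 hK2
    simp only [Finset.mem_range] at hK1 hK2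
    rw [coeff_phi_pow_eq_zero (xf ρs) (by omega), mul_zero, mul_zero]

end StmtAux

open StmtAux

/-- Recursion `Σ_{j=0}^{B−3−M} C(M+j,j)·(2j+1)!!·ρ_j·γ^{M+j}_B = γ^{M−1}_{B−1}` satisfied by
the coefficients `γ^M_B` of the multi-boundary correlation functions. -/
theorem stmt_12 (ρs : ℕ → ℝ) (hρ : ρs 0 ≠ 0) (B M : ℕ) (hB : 4 ≤ B) (hM : M ≤ B - 3) :
    ∑ j ∈ Finset.range (B - 3 - M + 1),
      (((M + j).choose j : ℕ) : ℝ) * df j * ρs j * gam ρs B ((M : ℤ) + j)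
    = gam ρs (B - 1) ((M : ℤ) - 1) := by
  set m := B - 3 - M with hm_def
  set h : PowerSeries ℝ :=
    PowerSeries.mk (fun j => ((j : ℝ) + 1) * xf ρs j / j.factorial) with hh_def
  have hx0 : xf ρs 0 = -1 := by
    rw [xf]
    norm_num [df, Nat.factorial]
    field_simp
  -- Step 1 : rewrite each summand
  have hterm : ∀ j ∈ Finset.range (m + 1),
      (((M + j).choose j : ℕ) : ℝ) * df j * ρs j * gam ρs B ((M : ℤ) + j)
        = (ρs 0 ^ (B - 3))⁻¹ * (-(ρs 0) * (M.factorial : ℝ)⁻¹) *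
            (PowerSeries.coeff j h *
              PowerSeries.coeff (m - j) (Qser (xf ρs) (B - 3) m)) := by
    intro j hj
    rw [Finset.mem_range] at hj
    rw [show (M : ℤ) + j = ((M + j : ℕ) : ℤ) by push_cast; ring]
    rw [gam_eq ρs B (M + j) m (by omega) (by omega) (by omega)]
    rw [show B - 3 - (M + j) = m - j by omega]
    rw [← coeff_Qser]
    rw [hh_def, PowerSeries.coeff_mk]
    have hch : (((M + j).choose j : ℕ) : ℝ) * (j.factorial : ℝ) * (M.factorial : ℝ)
        = ((M + j).factorial : ℝ) := by
      have := Nat.choose_mul_factorial_mul_factorial (Nat.le_add_left j M)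
      rw [Nat.add_sub_cancel] at this
      exact_mod_cast this
    have h1 : (j.factorial : ℝ) ≠ 0 := Nat.cast_ne_zero.mpr (Nat.factorial_ne_zero _)
    have h2 : (M.factorial : ℝ) ≠ 0 := Nat.cast_ne_zero.mpr (Nat.factorial_ne_zero _)
    have h3 : ((M + j).factorial : ℝ) ≠ 0 := Nat.cast_ne_zero.mpr (Nat.factorial_ne_zero _)
    have h4 : ((j : ℝ) + 1) ≠ 0 := by positivity
    rw [xf]
    have hch' : (((M + j).choose j : ℕ) : ℝ)
        = ((M + j).factorial : ℝ) / ((j.factorial : ℝ) * (M.factorial : ℝ)) := by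
      rw [eq_div_iff (by exact mul_ne_zero h1 h2)]
      linear_combination hch
    rw [hch']
    field_simp
  rw [Finset.sum_congr rfl hterm, ← Finset.mul_sum]
  -- Step 2 : recognize the coefficient of a product
  have hconv : PowerSeries.coeff m (h * Qser (xf ρs) (B - 3) m)
      = ∑ j ∈ Finset.range (m + 1),
          PowerSeries.coeff j h *
            PowerSeries.coeff (m - j) (Qser (xf ρs) (B - 3) m) := by
    rw [PowerSeries.coeff_mul, Finset.Nat.sum_antidiagonal_eq_sum_range_succ_mk]
  rw [← hconv]
  -- Step 3 : apply the key coefficient identity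
  obtain ⟨n', hn'⟩ : ∃ n', B - 3 = n' + 1 := ⟨B - 4, by omega⟩
  rw [hh_def, hn', key_coeff (xf ρs) hx0 n' m M (by omega)]
  -- Step 4 : compare with the right-hand side
  rcases Nat.eq_zero_or_pos M with rfl | hMpos
  · rw [gam, if_neg (by omega)]
    simp
  · obtain ⟨s, rfl⟩ : ∃ s, M = s + 1 := ⟨M - 1, by omega⟩
    rw [show ((s + 1 : ℕ) : ℤ) - 1 = ((s : ℕ) : ℤ) by push_cast; ring]
    rw [gam_eq ρs (B - 1) s m (by omega) (by omega) (by omega)]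
    rw [show B - 1 - 3 = n' by omega]
    rw [show n' - s = m by omega]
    rw [← coeff_Qser]
    have hc1 : ((s + 1).factorial : ℝ) = ((s : ℝ) + 1) * (s.factorial : ℝ) := by
      rw [Nat.factorial_succ]; push_cast; ring
    have hs1 : (s.factorial : ℝ) ≠ 0 := Nat.cast_ne_zero.mpr (Nat.factorial_ne_zero _)
    rw [hc1, pow_succ]
    push_cast
    field_simp
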